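/- arXiv:chao-dyn/9701020 — 8 statements merged into one kernel-verified Lean document; each statement's English description precedes it below -/
import Mathlib

section
/- For any a, b in (0,1), the integral of ln(x/(1-x)) from a to b satisfies ∫_a^b ln(x/(1-x)) dx ≤ (b-a)·ln(b/(1-b)) − 2(b-a)². -/
open Set intervalIntegral

noncomputable def Fln (x : ℝ) : ℝ := Real.log x - Real.log (1 - x)

lemma gmono : MonotoneOn (fun x => Fln x - 4*x) (Set.Ioo (0:ℝ) 1) := by
  have hd : ∀ x ∈ Set.Ioo (0:ℝ) 1, HasDerivAt (fun x => Fln x - 4*x)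
      ((1-2*x)^2/(x*(1-x))) x := by
    intro x hx
    have hx0 : x ≠ 0 := hx.1.ne'
    have hx1 : (1:ℝ) - x ≠ 0 := by have := hx.2; intro h; linarith [h]
    have h1 : HasDerivAt (fun x : ℝ => Real.log x) x⁻¹ x := Real.hasDerivAt_log hx0
    have h2 : HasDerivAt (fun x : ℝ => Real.log (1 - x)) ((-1)/(1-x)) x :=
      ((hasDerivAt_id x).const_sub 1).log hx1
    have h3 : HasDerivAt (fun x : ℝ => 4*x) 4 x := by
      simpa using (hasDerivAt_id x).const_mul 4
    have h : HasDerivAt (fun x => Fln x - 4*x) (x⁻¹ - -1 / (1 - x) - 4) x := (h1.sub h2).sub h3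
    convert h using 1
    have hxpos := hx.1
    have h1xpos : (0:ℝ) < 1 - x := by linarith [hx.2]
    field_simp
    ring
  apply monotoneOn_of_deriv_nonneg (convex_Ioo 0 1)
  · exact fun x hx => (hd x hx).continuousAt.continuousWithinAt
  · intro x hx
    rw [interior_Ioo] at hx
    exact (hd x hx).differentiableAt.differentiableWithinAt
  · intro x hx
    rw [interior_Ioo] at hx
    rw [(hd x hx).deriv]
    have h1 : (0:ℝ) < x := hx.1
    have h2 : (0:ℝ) < 1 - x := by linarith [hx.2]
    positivity

lemma Fcont {x : ℝ} (hx : x ∈ Set.Ioo (0:ℝ) 1) : ContinuousAt Fln x := by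
  have hx0 : x ≠ 0 := hx.1.ne'
  have hx1 : (1:ℝ) - x ≠ 0 := by have := hx.2; intro h; linarith [h]
  exact (Real.continuousAt_log hx0).sub
    ((Real.continuousAt_log hx1).comp ((continuous_const.sub continuous_id).continuousAt))

theorem stmt_1 (a b : ℝ) (ha : a ∈ Set.Ioo (0:ℝ) 1) (hb : b ∈ Set.Ioo (0:ℝ) 1) :
    ∫ x in a..b, Real.log (x / (1 - x)) ≤
      (b - a) * Real.log (b / (1 - b)) - 2 * (b - a)^2 := by
  have hb1 : (0:ℝ) < 1 - b := by linarith [hb.2]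
  have hFb : Real.log (b / (1 - b)) = Fln b := Real.log_div hb.1.ne' hb1.ne'
  have hcongr : ∫ x in a..b, Real.log (x / (1 - x)) = ∫ x in a..b, Fln x := by
    apply intervalIntegral.integral_congr
    intro x hx
    have hxm : x ∈ Set.Ioo (0:ℝ) 1 := by
      rcases hx with ⟨h1, h2⟩
      constructor
      · exact lt_of_lt_of_le (lt_min ha.1 hb.1) h1
      · exact lt_of_le_of_lt h2 (max_lt ha.2 hb.2)
    have h1x : (0:ℝ) < 1 - x := by linarith [hxm.2]
    exact Real.log_div hxm.1.ne' h1x.ne'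
  rw [hcongr, hFb]
  rcases le_or_gt a b with hab | hab
  · have hsub : Set.Icc a b ⊆ Set.Ioo (0:ℝ) 1 :=
      fun x hx => ⟨lt_of_lt_of_le ha.1 hx.1, lt_of_le_of_lt hx.2 hb.2⟩
    have hint1 : IntervalIntegrable Fln MeasureTheory.volume a b := by
      apply ContinuousOn.intervalIntegrable
      intro x hx
      rw [Set.uIcc_of_le hab] at hx
      exact (Fcont (hsub hx)).continuousWithinAt
    have hint2 : IntervalIntegrable (fun x => Fln b - 4*(b - x)) MeasureTheory.volume a b :=
      (Continuous.intervalIntegrable (by continuity) a b)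
    have hmono := intervalIntegral.integral_mono_on hab hint1 hint2 (by
      intro x hx
      have hxm := hsub hx
      have := gmono hxm (Set.mem_Ioo.mpr ⟨hb.1, hb.2⟩) hx.2
      simp only at this
      linarith)
    calc ∫ x in a..b, Fln x ≤ ∫ x in a..b, (Fln b - 4*(b - x)) := hmono
      _ = (b - a) * Fln b - 2*(b - a)^2 := by
          have h1 : ∀ x : ℝ, Fln b - 4*(b - x) = (Fln b - 4*b) + 4*x := fun x => by ring
          simp_rw [h1]
          rw [intervalIntegral.integral_add (g := fun x : ℝ => 4*x) intervalIntegrable_const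
            ((continuous_const.mul continuous_id').intervalIntegrable a b)]
          rw [intervalIntegral.integral_const_mul, integral_id]
          simp
          ring
  · have hba : b ≤ a := hab.le
    have hsub : Set.Icc b a ⊆ Set.Ioo (0:ℝ) 1 :=
      fun x hx => ⟨lt_of_lt_of_le hb.1 hx.1, lt_of_le_of_lt hx.2 ha.2⟩
    have hint1 : IntervalIntegrable Fln MeasureTheory.volume b a := by
      apply ContinuousOn.intervalIntegrable
      intro x hx
      rw [Set.uIcc_of_le hba] at hx
      exact (Fcont (hsub hx)).continuousWithinAt
    have hint2 : IntervalIntegrable (fun x => Fln b + 4*(x - b)) MeasureTheory.volume b a :=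
      (Continuous.intervalIntegrable (by continuity) b a)
    have hmono := intervalIntegral.integral_mono_on hba hint2 hint1 (by
      intro x hx
      have hxm := hsub hx
      have := gmono (Set.mem_Ioo.mpr ⟨hb.1, hb.2⟩) hxm hx.1
      simp only at this
      linarith)
    have hval : ∫ x in b..a, (Fln b + 4*(x - b)) = (a - b) * Fln b + 2*(a - b)^2 := by
      have h1 : ∀ x : ℝ, Fln b + 4*(x - b) = (Fln b - 4*b) + 4*x := fun x => by ring
      simp_rw [h1]
      rw [intervalIntegral.integral_add (g := fun x : ℝ => 4*x) intervalIntegrable_const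
        ((continuous_const.mul continuous_id').intervalIntegrable b a)]
      rw [intervalIntegral.integral_const_mul, integral_id]
      simp
      ring
    rw [intervalIntegral.integral_symm]
    have : (a - b) * Fln b + 2*(a - b)^2 ≤ ∫ x in b..a, Fln x := hval ▸ hmono
    linarith
end

section
/- Let W be an n×n real matrix, K and Z real diagonal matrices with Z having nonnegative diagonal entries, and let √Z denote the diagonal matrix of square roots of the entries of Z. Then the matrices K + Z·W and K + √Z·W·√Z have the same characteristic polynomial, hence the same eigenvalues. -/
open Matrix Finset

lemma key_det {R : Type*} [CommRing R] {n : ℕ} (d a : Fin n → R)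
    (N : Matrix (Fin n) (Fin n) R) :
    (Matrix.diagonal d - Matrix.diagonal (fun i => a i * a i) * N).det
      = (Matrix.diagonal d - Matrix.diagonal a * N * Matrix.diagonal a).det := by
  rw [Matrix.det_apply', Matrix.det_apply']
  refine Finset.sum_congr rfl fun σ _ => ?_
  congr 1
  have h1 : ∀ i, (Matrix.diagonal d - Matrix.diagonal (fun i => a i * a i) * N) (σ i) i
      = Matrix.diagonal d (σ i) i - a (σ i) * a (σ i) * N (σ i) i := by
    intro i; simp [Matrix.sub_apply, Matrix.diagonal_mul]
  have h2 : ∀ i, (Matrix.diagonal d - Matrix.diagonal a * N * Matrix.diagonal a) (σ i) i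
      = Matrix.diagonal d (σ i) i - a (σ i) * N (σ i) i * a i := by
    intro i; simp [Matrix.sub_apply, Matrix.diagonal_mul, Matrix.mul_diagonal, mul_assoc]
  simp only [h1, h2]
  rw [← Finset.prod_filter_mul_prod_filter_not Finset.univ (fun i => σ i = i),
      ← Finset.prod_filter_mul_prod_filter_not Finset.univ (fun i => σ i = i)]
  congr 1
  · refine Finset.prod_congr rfl fun i hi => ?_
    simp only [Finset.mem_filter] at hi
    rw [hi.2]
    ring
  · set s := Finset.univ.filter (fun i => ¬ σ i = i) with hs
    have hdiag : ∀ i ∈ s, Matrix.diagonal d (σ i) i = 0 := by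
      intro i hi
      simp only [hs, Finset.mem_filter] at hi
      exact Matrix.diagonal_apply_ne d hi.2
    calc ∏ i ∈ s, (Matrix.diagonal d (σ i) i - a (σ i) * a (σ i) * N (σ i) i)
        = ∏ i ∈ s, (a (σ i) * (-(a (σ i) * N (σ i) i))) := by
          refine Finset.prod_congr rfl fun i hi => ?_
          rw [hdiag i hi]; ring
      _ = (∏ i ∈ s, a (σ i)) * ∏ i ∈ s, (-(a (σ i) * N (σ i) i)) :=
          Finset.prod_mul_distrib
      _ = (∏ i ∈ s, a i) * ∏ i ∈ s, (-(a (σ i) * N (σ i) i)) := by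
          rw [Equiv.Perm.prod_comp σ s a ?_]
          intro x hx
          simp only [hs, Finset.mem_coe, Finset.mem_filter, Finset.mem_univ, true_and]
          exact hx
      _ = ∏ i ∈ s, (a i * (-(a (σ i) * N (σ i) i))) := Finset.prod_mul_distrib.symm
      _ = ∏ i ∈ s, (Matrix.diagonal d (σ i) i - a (σ i) * N (σ i) i * a i) := by
          refine Finset.prod_congr rfl fun i hi => ?_
          rw [hdiag i hi]; ring

theorem stmt_4 {n : ℕ} (W : Matrix (Fin n) (Fin n) ℝ) (k z : Fin n → ℝ)
    (hz : ∀ i, 0 ≤ z i) :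
    (Matrix.diagonal k + Matrix.diagonal z * W).charpoly =
      (Matrix.diagonal k +
        Matrix.diagonal (fun i => Real.sqrt (z i)) * W *
          Matrix.diagonal (fun i => Real.sqrt (z i))).charpoly := by
  unfold Matrix.charpoly Matrix.charmatrix
  set C := Polynomial.C (R := ℝ) with hC
  set X := Polynomial.X (R := ℝ)
  simp only [map_add, RingHom.mapMatrix_apply, Matrix.map_mul, Matrix.scalar_apply]
  rw [Matrix.diagonal_map (map_zero C), Matrix.diagonal_map (map_zero C),
      Matrix.diagonal_map (map_zero C)]
  rw [sub_add_eq_sub_sub, sub_add_eq_sub_sub, Matrix.diagonal_sub]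
  have hzz : (fun i => C (z i)) = fun i => C (Real.sqrt (z i)) * C (Real.sqrt (z i)) := by
    funext i
    rw [← _root_.map_mul, Real.mul_self_sqrt (hz i)]
  rw [hzz]
  exact key_det _ (fun i => C (Real.sqrt (z i))) (W.map C)
end

section
/- Let W be a symmetric real n×n matrix, K a real diagonal matrix, and Z a diagonal matrix with nonnegative real entries. Then all eigenvalues of K + Z·W are real. -/
open Matrix Polynomial

private lemma aux_eigvec {n : ℕ} (M : Matrix (Fin n) (Fin n) ℂ) (μ : ℂ) (hμ : M.charpoly.IsRoot μ) :
    ∃ v : Fin n → ℂ, v ≠ 0 ∧ M.mulVec v = μ • v := by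
  have h0 : (Matrix.scalar (Fin n) μ - M).det = 0 := by
    have := hμ
    rw [Polynomial.IsRoot, Matrix.charpoly, _root_.eval_det, matPolyEquiv_charmatrix] at this
    simpa using this
  obtain ⟨v, hv, hMv⟩ := (Matrix.exists_mulVec_eq_zero_iff).2 h0
  refine ⟨v, hv, ?_⟩
  have := hMv
  rw [Matrix.sub_mulVec] at this
  have h2 : (Matrix.scalar (Fin n) μ).mulVec v = μ • v := by
    ext i; simp [Matrix.mulVec_diagonal, Pi.algebraMap_apply]
  rw [h2] at this
  exact (sub_eq_zero.mp this).symm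


open Matrix Polynomial Finset

private lemma aux_main {n : ℕ} (W : Matrix (Fin n) (Fin n) ℝ) (hW : W.IsSymm)
    (k z : Fin n → ℝ) (hz : ∀ i, 0 ≤ z i) (μ : ℂ)
    (v : Fin n → ℂ) (hv : v ≠ 0)
    (hMv : ((Matrix.diagonal k + Matrix.diagonal z * W).map (algebraMap ℝ ℂ)) *ᵥ v = μ • v) :
    μ.im = 0 := by
  set Wc : Matrix (Fin n) (Fin n) ℂ := W.map (algebraMap ℝ ℂ) with hWc
  have hWv : ∀ i, (Wc *ᵥ v) i = ∑ j, (W i j : ℂ) * v j := fun i => by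
    simp [hWc, Matrix.mulVec, dotProduct, Matrix.map_apply, Algebra.algebraMap_self]
  have hrow : ∀ i, (k i : ℂ) * v i + (z i : ℂ) * (Wc *ᵥ v) i = μ * v i := by
    intro i
    have hMeq : ((Matrix.diagonal k + Matrix.diagonal z * W).map (algebraMap ℝ ℂ))
        = Matrix.diagonal (fun i => (k i : ℂ)) + Matrix.diagonal (fun i => (z i : ℂ)) * Wc := by
      rw [Matrix.map_add (f := algebraMap ℝ ℂ) (map_add _), Matrix.map_mul,
        Matrix.diagonal_map (map_zero _), Matrix.diagonal_map (map_zero _)]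
      rfl
    rw [hMeq] at hMv
    have := congrFun hMv i
    rw [Matrix.add_mulVec, ← Matrix.mulVec_mulVec (N := Wc)] at this
    simpa only [Pi.add_apply, Pi.smul_apply, smul_eq_mul, Matrix.mulVec_diagonal] using this
  by_cases hcase : ∃ i, z i = 0 ∧ v i ≠ 0
  · obtain ⟨i, hzi, hvi⟩ := hcase
    have := hrow i
    rw [hzi] at this
    simp only [Complex.ofReal_zero, zero_mul, add_zero] at this
    have : (k i : ℂ) = μ := mul_right_cancel₀ hvi this
    rw [← this]
    simp
  · push_neg at hcase
    set c : Fin n → ℝ := fun i => (z i)⁻¹ with hcdef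
    have hsum : ∑ i, (starRingEnd ℂ) (v i) * (c i : ℂ) * ((k i : ℂ) * v i + (z i : ℂ) * (Wc *ᵥ v) i)
        = μ * ∑ i, (starRingEnd ℂ) (v i) * (c i : ℂ) * v i := by
      rw [Finset.mul_sum]
      exact Finset.sum_congr rfl fun i _ => by rw [hrow i]; ring
    have hcz : ∀ i, (starRingEnd ℂ) (v i) * (c i : ℂ) * ((z i : ℂ) * (Wc *ᵥ v) i)
        = (starRingEnd ℂ) (v i) * (Wc *ᵥ v) i := by
      intro i
      by_cases hzi : z i = 0
      · simp [hcase i hzi]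
      · have h1 : (c i : ℂ) * (z i : ℂ) = 1 := by
          rw [hcdef]
          push_cast
          exact inv_mul_cancel₀ (by exact_mod_cast hzi)
        calc (starRingEnd ℂ) (v i) * (c i : ℂ) * ((z i : ℂ) * (Wc *ᵥ v) i)
            = (starRingEnd ℂ) (v i) * (Wc *ᵥ v) i * ((c i :ℂ) * (z i : ℂ)) := by ring
          _ = (starRingEnd ℂ) (v i) * (Wc *ᵥ v) i := by rw [h1, mul_one]
    have hsplit : ∑ i, (starRingEnd ℂ) (v i) * (c i : ℂ) * ((k i : ℂ) * v i + (z i : ℂ) * (Wc *ᵥ v) i)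
        = (∑ i, (starRingEnd ℂ) (v i) * (c i : ℂ) * ((k i : ℂ) * v i))
          + ∑ i, (starRingEnd ℂ) (v i) * (Wc *ᵥ v) i := by
      rw [← Finset.sum_add_distrib]
      exact Finset.sum_congr rfl fun i _ => by rw [← hcz i]; ring
    have ha : (∑ i, (starRingEnd ℂ) (v i) * (c i : ℂ) * ((k i : ℂ) * v i))
        = ((∑ i, c i * k i * Complex.normSq (v i) : ℝ) : ℂ) := by
      push_cast [← Complex.mul_conj]
      exact Finset.sum_congr rfl fun i _ => by ring
    have hb : (∑ i, (starRingEnd ℂ) (v i) * (Wc *ᵥ v) i).im = 0 := by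
      rw [← Complex.conj_eq_iff_im, map_sum]
      calc ∑ i, (starRingEnd ℂ) ((starRingEnd ℂ) (v i) * (Wc *ᵥ v) i)
          = ∑ i, ∑ j, (W i j : ℂ) * (v i * (starRingEnd ℂ) (v j)) := by
            refine Finset.sum_congr rfl fun i _ => ?_
            rw [_root_.map_mul, Complex.conj_conj, hWv i, map_sum, Finset.mul_sum]
            refine Finset.sum_congr rfl fun j _ => ?_
            rw [_root_.map_mul, Complex.conj_ofReal]
            ring
        _ = ∑ j, ∑ i, (W i j : ℂ) * (v i * (starRingEnd ℂ) (v j)) := Finset.sum_comm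
        _ = ∑ j, (starRingEnd ℂ) (v j) * (Wc *ᵥ v) j := by
            refine Finset.sum_congr rfl fun j _ => ?_
            rw [hWv j, Finset.mul_sum]
            refine Finset.sum_congr rfl fun i _ => ?_
            rw [show W i j = W j i from congrFun (congrFun hW.symm i) j]
            ring
    have ht : (∑ i, (starRingEnd ℂ) (v i) * (c i : ℂ) * v i)
        = ((∑ i, c i * Complex.normSq (v i) : ℝ) : ℂ) := by
      push_cast [← Complex.mul_conj]
      exact Finset.sum_congr rfl fun i _ => by ring
    have htpos : 0 < ∑ i, c i * Complex.normSq (v i) := by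
      obtain ⟨i, hi⟩ := Function.ne_iff.mp hv
      have hzi : z i ≠ 0 := fun h => hi (hcase i h)
      have hzi' : 0 < z i := lt_of_le_of_ne (hz i) (Ne.symm hzi)
      have hterm : 0 < c i * Complex.normSq (v i) :=
        mul_pos (by rw [hcdef]; exact inv_pos.mpr hzi') (Complex.normSq_pos.mpr hi)
      exact Finset.sum_pos' (fun j _ => mul_nonneg
        (by rw [hcdef]; exact inv_nonneg.mpr (hz j)) (Complex.normSq_nonneg _))
        ⟨i, Finset.mem_univ i, hterm⟩
    rw [hsplit, ha, ht] at hsum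
    have him := congrArg Complex.im hsum
    simp only [Complex.add_im, Complex.ofReal_im, Complex.mul_im, Complex.ofReal_re,
      zero_add, mul_zero, add_zero, hb] at him
    exact (mul_eq_zero.mp him.symm).resolve_right (ne_of_gt htpos)


theorem stmt_5 {n : ℕ} (W : Matrix (Fin n) (Fin n) ℝ) (hW : W.IsSymm)
    (k z : Fin n → ℝ) (hz : ∀ i, 0 ≤ z i) (μ : ℂ)
    (hμ : (((Matrix.diagonal k + Matrix.diagonal z * W).map
        (algebraMap ℝ ℂ)).charpoly).IsRoot μ) :
    μ.im = 0 := by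
  obtain ⟨v, hv, hMv⟩ := aux_eigvec _ μ hμ
  exact aux_main W hW k z hz μ v hv hMv
end

section
/- Let W be a symmetric real n×n matrix and Z a diagonal matrix with strictly positive diagonal entries. Then all eigenvalues of Z·W are positive if and only if W is positive definite, and all eigenvalues of Z·W are negative if and only if W is negative definite. -/
open Matrix Polynomial

variable {m : ℕ}

lemma my_eval_charpoly (M : Matrix (Fin m) (Fin m) ℝ) (μ : ℝ) :
    (M.charpoly).eval μ = (μ • (1 : Matrix (Fin m) (Fin m) ℝ) - M).det := by
  rw [Matrix.charpoly, ← Polynomial.coe_evalRingHom, RingHom.map_det]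
  congr 1
  ext i j
  by_cases h : i = j <;>
    simp [charmatrix_apply, h, Matrix.one_apply, Matrix.smul_apply, Matrix.sub_apply,
      Matrix.diagonal_apply]

lemma my_root_neg (M : Matrix (Fin m) (Fin m) ℝ) (μ : ℝ) :
    ((-M).charpoly).IsRoot μ ↔ (M.charpoly).IsRoot (-μ) := by
  have e1 : μ • (1 : Matrix (Fin m) (Fin m) ℝ) - -M = μ • 1 + M := sub_neg_eq_add _ _
  have e2 : (-μ) • (1 : Matrix (Fin m) (Fin m) ℝ) - M
      = -(μ • (1 : Matrix (Fin m) (Fin m) ℝ) + M) := by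
    ext i j
    by_cases h : i = j <;>
      simp [Matrix.smul_apply, Matrix.one_apply, Matrix.add_apply, Matrix.sub_apply,
        Matrix.neg_apply, h] <;> ring
  rw [Polynomial.IsRoot, Polynomial.IsRoot, my_eval_charpoly, my_eval_charpoly, e1, e2,
    Matrix.det_neg]
  constructor
  · intro h; simp [h]
  · intro h
    rcases mul_eq_zero.mp h with h | h
    · exact absurd h (by positivity)
    · exact h

lemma my_key (W : Matrix (Fin m) (Fin m) ℝ) (hW : W.IsSymm)
    (z : Fin m → ℝ) (hz : ∀ i, 0 < z i) :
    (∀ μ : ℝ, ((Matrix.diagonal z * W).charpoly).IsRoot μ → 0 < μ) ↔ W.PosDef := by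
  set s : Fin m → ℝ := fun i => Real.sqrt (z i) with hs_def
  have hs : ∀ i, 0 < s i := fun i => Real.sqrt_pos.2 (hz i)
  set D : Matrix (Fin m) (Fin m) ℝ := Matrix.diagonal s with hD_def
  have hDD : D * D = Matrix.diagonal z := by
    have hzz : (fun i => s i * s i) = z := funext fun i => Real.mul_self_sqrt (hz i).le
    rw [hD_def, Matrix.diagonal_mul_diagonal, hzz]
  set S : Matrix (Fin m) (Fin m) ℝ := D * W * D with hS_def
  have hdetD : D.det ≠ 0 := by
    rw [hD_def, Matrix.det_diagonal]
    exact ne_of_gt (Finset.prod_pos fun i _ => hs i)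
  -- roots coincide
  have hroot : ∀ μ : ℝ, ((Matrix.diagonal z * W).charpoly).IsRoot μ ↔ (S.charpoly).IsRoot μ := by
    intro μ
    have hcomm : (μ • (1 : Matrix (Fin m) (Fin m) ℝ) - Matrix.diagonal z * W) * D
        = D * (μ • (1 : Matrix (Fin m) (Fin m) ℝ) - S) := by
      have hkey : Matrix.diagonal z * W * D = D * S := by
        rw [hS_def, ← hDD]
        simp only [Matrix.mul_assoc]
      rw [Matrix.sub_mul, Matrix.mul_sub, Matrix.smul_mul, Matrix.one_mul,
        Matrix.mul_smul, Matrix.mul_one, hkey]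
    have hdet : (μ • (1 : Matrix (Fin m) (Fin m) ℝ) - Matrix.diagonal z * W).det
        = (μ • (1 : Matrix (Fin m) (Fin m) ℝ) - S).det := by
      have h := congrArg Matrix.det hcomm
      rw [Matrix.det_mul, Matrix.det_mul, mul_comm D.det] at h
      exact mul_right_cancel₀ hdetD h
    simp only [Polynomial.IsRoot, my_eval_charpoly, hdet]
  -- S is hermitian
  have hDT : Dᵀ = D := by rw [hD_def, Matrix.diagonal_transpose]
  have hST : Sᵀ = S := by
    rw [hS_def, Matrix.transpose_mul, Matrix.transpose_mul, hDT, hW.eq, Matrix.mul_assoc]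
  have hSH : S.IsHermitian := by
    rw [Matrix.IsHermitian, Matrix.conjTranspose]
    exact (Matrix.conjTranspose_eq_transpose_of_trivial S).trans hST
  have hWH : W.IsHermitian := by
    rw [Matrix.IsHermitian, Matrix.conjTranspose]
    exact (Matrix.conjTranspose_eq_transpose_of_trivial W).trans hW.eq
  -- quadratic form identity
  have hquad : ∀ x : Fin m → ℝ, x ⬝ᵥ S *ᵥ x = (D *ᵥ x) ⬝ᵥ W *ᵥ (D *ᵥ x) := by
    intro x
    rw [hS_def, ← Matrix.mulVec_mulVec, ← Matrix.mulVec_mulVec, Matrix.dotProduct_mulVec x D,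
      hD_def]
    congr 1
    funext i
    simp [Matrix.vecMul_diagonal, Matrix.mulVec_diagonal, mul_comm]
  have hDinj : ∀ x : Fin m → ℝ, x ≠ 0 → D *ᵥ x ≠ 0 := by
    intro x hx h
    apply hx
    funext i
    have := congrFun h i
    simp only [hD_def, Matrix.mulVec_diagonal, Pi.zero_apply] at this
    have := mul_eq_zero.mp this
    rcases this with h' | h'
    · exact absurd h' (ne_of_gt (hs i))
    · simpa using h'
  -- S PosDef ↔ W PosDef
  have hSW : S.PosDef ↔ W.PosDef := by
    constructor
    · intro hS
      refine Matrix.PosDef.of_dotProduct_mulVec_pos hWH fun y hy => ?_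
      set x : Fin m → ℝ := fun i => y i / s i with hx_def
      have hDx : D *ᵥ x = y := by
        funext i
        simp only [hD_def, Matrix.mulVec_diagonal, hx_def]
        rw [mul_comm, div_mul_cancel₀ _ (ne_of_gt (hs i))]
      have hx : x ≠ 0 := by
        intro h
        apply hy
        rw [← hDx, h, Matrix.mulVec_zero]
      have := hS.dotProduct_mulVec_pos hx
      simpa [star_trivial, hquad x, hDx] using this
    · intro hw
      refine Matrix.PosDef.of_dotProduct_mulVec_pos hSH fun x hx => ?_
      have := hw.dotProduct_mulVec_pos (hDinj x hx)
      simpa [star_trivial, hquad x] using this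
  rw [← hSW]
  simp only [hroot]
  constructor
  · intro h
    have heig : ∀ i, 0 < hSH.eigenvalues i := by
      intro i
      apply h
      rw [Polynomial.IsRoot, my_eval_charpoly]
      rw [← Matrix.exists_mulVec_eq_zero_iff]
      refine ⟨⇑(hSH.eigenvectorBasis i), ?_, ?_⟩
      · have := hSH.eigenvectorBasis.orthonormal.ne_zero i
        intro hcontra
        apply this
        ext j
        exact congrFun hcontra j
      · rw [Matrix.sub_mulVec, hSH.mulVec_eigenvectorBasis]
        simp [Matrix.smul_mulVec]
    have hpsd : S.PosSemidef := hSH.posSemidef_iff_eigenvalues_nonneg.mpr fun i => (heig i).le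
    refine Matrix.PosDef.of_dotProduct_mulVec_pos hSH fun x hx => ?_
    rcases lt_or_eq_of_le (hpsd.dotProduct_mulVec_nonneg x) with hlt | heq
    · exact hlt
    · exfalso
      have hmz : S *ᵥ x = 0 := (hpsd.dotProduct_mulVec_zero_iff x).mp heq.symm
      have : (0:ℝ) < 0 := by
        apply h
        rw [Polynomial.IsRoot, my_eval_charpoly, ← Matrix.exists_mulVec_eq_zero_iff]
        exact ⟨x, hx, by simp [Matrix.sub_mulVec, Matrix.neg_mulVec, hmz]⟩
      exact lt_irrefl _ this
  · intro hS μ hμ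
    rw [Polynomial.IsRoot, my_eval_charpoly, ← Matrix.exists_mulVec_eq_zero_iff] at hμ
    obtain ⟨v, hv, hveq⟩ := hμ
    rw [Matrix.sub_mulVec, sub_eq_zero] at hveq
    have hSv : S *ᵥ v = μ • v := by
      rw [← hveq]; simp [Matrix.smul_mulVec]
    have hpos := hS.dotProduct_mulVec_pos hv
    rw [star_trivial, hSv] at hpos
    have hvv : 0 < v ⬝ᵥ v := by
      have := Matrix.dotProduct_star_self_pos_iff (v := v)
      simpa [star_trivial] using this.mpr hv
    rw [dotProduct_smul, smul_eq_mul] at hpos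
    rcases mul_pos_iff.mp hpos with ⟨h1, _⟩ | ⟨_, h2⟩
    · exact h1
    · exact absurd h2 (not_lt.2 hvv.le)

theorem stmt_7 {n : ℕ} (W : Matrix (Fin n) (Fin n) ℝ) (hW : W.IsSymm)
    (z : Fin n → ℝ) (hz : ∀ i, 0 < z i) :
    ((∀ μ : ℝ, ((Matrix.diagonal z * W).charpoly).IsRoot μ → 0 < μ) ↔ W.PosDef) ∧
    ((∀ μ : ℝ, ((Matrix.diagonal z * W).charpoly).IsRoot μ → μ < 0) ↔ (-W).PosDef) := by
  constructor
  · exact my_key W hW z hz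
  · have hWneg : (-W).IsSymm := by
      rw [Matrix.IsSymm] at *
      simp [hW]
    rw [← my_key (-W) hWneg z hz]
    have hM : Matrix.diagonal z * (-W) = -(Matrix.diagonal z * W) := by
      simp [Matrix.mul_neg]
    constructor
    · intro h μ hμ
      rw [hM, my_root_neg] at hμ
      have := h _ hμ
      linarith
    · intro h μ hμ
      have : ((Matrix.diagonal z * (-W)).charpoly).IsRoot (-μ) := by
        rw [hM, my_root_neg, neg_neg]; exact hμ
      have := h _ this
      linarith
end

section
/- For the TCNN dynamics y_i(t+1) = k·y_i(t) + Σ_j ω_{ij}·σ(y_j(t)/ε) + a_i − ω_{ii}a_{0i} with σ the logistic sigmoid, if −1 < k < 1 then every trajectory Y(t) is bounded for any initial condition Y(0); moreover for t sufficiently large |y_i(t)| ≤ d_i/(1−|k|) where d_i = Σ_j |ω_{ij}| + |a_i − ω_{ii}a_{0i}|. -/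
noncomputable def sigmoid (u : ℝ) : ℝ := 1 / (1 + Real.exp (-u))

lemma sigmoid_abs_le_one (u : ℝ) : |sigmoid u| ≤ 1 := by
  have h1 : (0:ℝ) < 1 + Real.exp (-u) := by positivity
  rw [sigmoid, abs_of_nonneg (by positivity), div_le_one h1]
  nlinarith [Real.exp_pos (-u)]

theorem stmt_11 {n : ℕ} (ω : Matrix (Fin n) (Fin n) ℝ) (a a0 : Fin n → ℝ)
    (k ε : ℝ) (hk : |k| < 1) (hε : 0 < ε)
    (y : ℕ → Fin n → ℝ)
    (hy : ∀ t i, y (t + 1) i =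
      k * y t i + (∑ j, ω i j * sigmoid (y t j / ε)) + a i - ω i i * a0 i) :
    (∃ M : ℝ, ∀ t i, |y t i| ≤ M) ∧
    ∀ δ > (0:ℝ), ∃ T : ℕ, ∀ t ≥ T, ∀ i,
      |y t i| ≤ ((∑ j, |ω i j|) + |a i - ω i i * a0 i|) / (1 - |k|) + δ := by
  set d : Fin n → ℝ := fun i => (∑ j, |ω i j|) + |a i - ω i i * a0 i| with hd
  have hdnn : ∀ i, 0 ≤ d i := fun i =>
    add_nonneg (Finset.sum_nonneg fun j _ => abs_nonneg _) (abs_nonneg _)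
  have hk0 : 0 ≤ |k| := abs_nonneg k
  have hk1 : 0 < 1 - |k| := by linarith
  have step : ∀ t i, |y (t + 1) i| ≤ |k| * |y t i| + d i := by
    intro t i
    rw [hy]
    have h1 : k * y t i + (∑ j, ω i j * sigmoid (y t j / ε)) + a i - ω i i * a0 i
        = (k * y t i + (∑ j, ω i j * sigmoid (y t j / ε))) + (a i - ω i i * a0 i) := by
      ring
    rw [h1]
    have hS : |∑ j, ω i j * sigmoid (y t j / ε)| ≤ ∑ j, |ω i j| := by
      calc |∑ j, ω i j * sigmoid (y t j / ε)|
          ≤ ∑ j, |ω i j * sigmoid (y t j / ε)| := Finset.abs_sum_le_sum_abs _ _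
        _ ≤ ∑ j, |ω i j| := Finset.sum_le_sum fun j _ => by
            rw [abs_mul]
            exact mul_le_of_le_one_right (abs_nonneg _) (sigmoid_abs_le_one _)
    have h2 := abs_add_le (k * y t i + ∑ j, ω i j * sigmoid (y t j / ε)) (a i - ω i i * a0 i)
    have h3 := abs_add_le (k * y t i) (∑ j, ω i j * sigmoid (y t j / ε))
    rw [abs_mul] at h3
    simp only [hd]
    linarith
  have key : ∀ t i, |y t i| ≤ |k| ^ t * |y 0 i| + d i / (1 - |k|) := by
    intro t
    induction t with
    | zero =>
      intro i
      have := div_nonneg (hdnn i) hk1.le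
      simp only [pow_zero, one_mul]
      linarith
    | succ t ih =>
      intro i
      have h2 := mul_le_mul_of_nonneg_left (ih i) hk0
      have e1 : |k| * (|k| ^ t * |y 0 i| + d i / (1 - |k|)) + d i
          = |k| ^ (t + 1) * |y 0 i| + d i / (1 - |k|) := by
        rw [pow_succ]
        field_simp
        ring
      calc |y (t + 1) i| ≤ |k| * |y t i| + d i := step t i
        _ ≤ |k| * (|k| ^ t * |y 0 i| + d i / (1 - |k|)) + d i := by linarith
        _ = |k| ^ (t + 1) * |y 0 i| + d i / (1 - |k|) := e1
  constructor
  · refine ⟨∑ i, (|y 0 i| + d i / (1 - |k|)), fun t i => ?_⟩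
    have h1 : |y 0 i| + d i / (1 - |k|) ≤ ∑ i, (|y 0 i| + d i / (1 - |k|)) :=
      Finset.single_le_sum (f := fun j => |y 0 j| + d j / (1 - |k|))
        (fun j _ => add_nonneg (abs_nonneg _)
        (div_nonneg (hdnn j) hk1.le)) (Finset.mem_univ i)
    have h2 : |k| ^ t * |y 0 i| ≤ |y 0 i| := by
      have := pow_le_one₀ hk0 hk.le (n := t)
      nlinarith [abs_nonneg (y 0 i)]
    have := key t i
    linarith
  · intro δ hδ
    set B : ℝ := ∑ i, |y 0 i| with hB
    have hBnn : 0 ≤ B := Finset.sum_nonneg fun i _ => abs_nonneg _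
    have htend : Filter.Tendsto (fun t => |k| ^ t * B) Filter.atTop (nhds 0) := by
      have := (tendsto_pow_atTop_nhds_zero_of_lt_one hk0 hk).mul_const B
      simpa using this
    have hev : ∀ᶠ t in Filter.atTop, |k| ^ t * B < δ :=
      htend.eventually_lt_const hδ
    obtain ⟨T, hT⟩ := Filter.eventually_atTop.mp hev
    refine ⟨T, fun t ht i => ?_⟩
    have h1 : |y 0 i| ≤ B := Finset.single_le_sum (f := fun j => |y 0 j|)
      (fun j _ => abs_nonneg _) (Finset.mem_univ i)
    have h2 : |k| ^ t * |y 0 i| ≤ |k| ^ t * B :=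
      mul_le_mul_of_nonneg_left h1 (pow_nonneg hk0 t)
    have := key t i
    have := hT t ht
    simp only [hd] at *
    linarith
end

section
/- Let F(Y) = kY + W·X(Y) + I₀' where X(Y)_i = 1/(1+e^{−y_i/ε}) and W = ω·W₀ with W₀ → identity as |ω| → ∞ (off-diagonal entries fixed, diagonal equal to ω). For any bounded set B ⊂ ℝⁿ, there exists c > 0 such that for all |ω| > c and all Y ∈ B, every eigenvalue λ of the Jacobian F_Y(Y) = k·I + (1/ε)·W·Z(Y), where Z(Y) = diag(x_i(1−x_i)), satisfies |λ| > 1. -/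
/-- Weight matrix with all diagonal entries equal to `ω` and fixed off-diagonal
entries `ω'`. -/
noncomputable def weightMat {n : ℕ} (ω' : Fin n → Fin n → ℝ) (ω : ℝ) :
    Matrix (Fin n) (Fin n) ℝ :=
  fun i j => if i = j then ω else ω' i j

/-- Jacobian `k·I + (1/ε)·W·Z(Y)` with `Z(Y) = diag(xᵢ(1-xᵢ))`, `xᵢ = σ(yᵢ/ε)`. -/
noncomputable def tcnnJacobian {n : ℕ} (ω' : Fin n → Fin n → ℝ) (ω k ε : ℝ)
    (Y : Fin n → ℝ) : Matrix (Fin n) (Fin n) ℝ :=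
  k • (1 : Matrix (Fin n) (Fin n) ℝ) +
    ε⁻¹ • (weightMat ω' ω *
      Matrix.diagonal (fun i => sigmoid (Y i / ε) * (1 - sigmoid (Y i / ε))))

lemma sigmoid_pos (u : ℝ) : 0 < sigmoid u := by
  unfold sigmoid
  positivity

lemma sigmoid_lt_one (u : ℝ) : sigmoid u < 1 := by
  unfold sigmoid
  rw [div_lt_one (by positivity)]
  linarith [Real.exp_pos (-u)]

lemma sigmoid_mono : Monotone sigmoid := by
  intro u v huv
  unfold sigmoid
  apply div_le_div_of_nonneg_left (by norm_num) (by positivity)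
  have := Real.exp_le_exp.mpr (neg_le_neg huv)
  linarith

lemma one_sub_sigmoid (u : ℝ) : 1 - sigmoid u = sigmoid (-u) := by
  unfold sigmoid
  have h1 : (0:ℝ) < 1 + Real.exp (-u) := by positivity
  have h2 : (0:ℝ) < 1 + Real.exp u := by positivity
  have he : Real.exp (-u) * Real.exp u = 1 := by
    rw [← Real.exp_add]; simp
  field_simp
  nlinarith

lemma eval_charpoly_eq {m : Type*} [Fintype m] [DecidableEq m] (A : Matrix m m ℂ) (μ : ℂ) :
    A.charpoly.eval μ = (μ • (1 : Matrix m m ℂ) - A).det := by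
  rw [Matrix.charpoly, eval_det, Matrix.matPolyEquiv_charmatrix]
  rw [Polynomial.eval_sub, Polynomial.eval_X, Polynomial.eval_C]
  congr 1
  rw [Matrix.scalar_apply, Matrix.smul_one_eq_diagonal]

open Matrix
theorem stmt_12 {n : ℕ} (ω' : Fin n → Fin n → ℝ) (k ε : ℝ) (hε : 0 < ε)
    (B : Set (Fin n → ℝ)) (hB : Bornology.IsBounded B) :
    ∃ c > (0:ℝ), ∀ ω : ℝ, c < |ω| → ∀ Y ∈ B, ∀ lam : ℂ,
      (((tcnnJacobian ω' ω k ε Y).map (algebraMap ℝ ℂ)).charpoly).IsRoot lam →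
        1 < ‖lam‖ := by
  obtain ⟨R, hR⟩ := isBounded_iff_forall_norm_le.mp hB
  -- lower bound for z values
  set δ : ℝ := sigmoid (-(R / ε)) * (1 - sigmoid (R / ε)) with hδdef
  have hδ : 0 < δ := by
    have := sigmoid_lt_one (R / ε)
    have := sigmoid_pos (-(R / ε))
    have := sigmoid_pos (R / ε)
    unfold δ
    nlinarith
  -- uniform bound on off-diagonal weights
  set Cω : ℝ := ∑ i : Fin n, ∑ j : Fin n, |ω' i j| with hCdef
  have hCω : ∀ i j : Fin n, |ω' i j| ≤ Cω := by
    intro i j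
    calc |ω' i j| ≤ ∑ j' : Fin n, |ω' i j'| :=
          Finset.single_le_sum (f := fun j' => |ω' i j'|)
            (fun j' _ => abs_nonneg _) (Finset.mem_univ j)
      _ ≤ Cω :=
          Finset.single_le_sum
            (f := fun i' => ∑ j' : Fin n, |ω' i' j'|)
            (fun i' _ => Finset.sum_nonneg fun j' _ => abs_nonneg _) (Finset.mem_univ i)
  have hCω0 : 0 ≤ Cω := Finset.sum_nonneg fun i _ => Finset.sum_nonneg fun j _ => abs_nonneg _
  set T : ℝ := (n : ℝ) * (ε⁻¹ * Cω) with hTdef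
  have hT0 : 0 ≤ T := by positivity
  refine ⟨max 1 (ε / δ * (2 + |k| + T)), lt_max_of_lt_left one_pos, ?_⟩
  intro ω hω Y hY lam hroot
  set z : Fin n → ℝ := fun i => sigmoid (Y i / ε) * (1 - sigmoid (Y i / ε)) with hzdef
  -- bounds on z
  have hzb : ∀ i, δ ≤ z i ∧ z i ≤ 1 := by
    intro i
    have hYi : |Y i| ≤ R := (norm_le_pi_norm Y i).trans (hR Y hY)
    have h1 : -(R / ε) ≤ Y i / ε := by
      rw [← neg_div]
      gcongr
      exact neg_le_of_abs_le hYi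
    have h2 : Y i / ε ≤ R / ε := by
      gcongr
      exact le_of_abs_le hYi
    have hs1 : sigmoid (-(R / ε)) ≤ sigmoid (Y i / ε) := sigmoid_mono h1
    have hs2 : 1 - sigmoid (Y i / ε) ≥ 1 - sigmoid (R / ε) := by
      have := sigmoid_mono h2; linarith
    have hp := sigmoid_pos (Y i / ε)
    have hq := sigmoid_lt_one (Y i / ε)
    have hp' := sigmoid_pos (-(R / ε))
    have hq' := sigmoid_lt_one (R / ε)
    constructor
    · unfold δ z; nlinarith
    · unfold z; nlinarith
  set A : Matrix (Fin n) (Fin n) ℂ := (tcnnJacobian ω' ω k ε Y).map (algebraMap ℝ ℂ) with hAdef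
  -- entries of A
  have hAdiag : ∀ i, A i i = ((k + ε⁻¹ * (ω * z i) : ℝ) : ℂ) := by
    intro i
    simp [hAdef, tcnnJacobian, weightMat, Matrix.map_apply, Matrix.add_apply,
      Matrix.smul_apply, Matrix.mul_diagonal, Matrix.one_apply, hzdef, smul_eq_mul]
  have hAoff : ∀ i j, i ≠ j → A i j = ((ε⁻¹ * (ω' i j * z j) : ℝ) : ℂ) := by
    intro i j hij
    simp [hAdef, tcnnJacobian, weightMat, Matrix.map_apply, Matrix.add_apply,
      Matrix.smul_apply, Matrix.mul_diagonal, Matrix.one_apply, hij, hzdef, smul_eq_mul]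
  -- lam is an eigenvalue
  have hdet : (lam • (1 : Matrix (Fin n) (Fin n) ℂ) - A).det = 0 := by
    rw [← eval_charpoly_eq]; exact hroot
  obtain ⟨v, hv0, hv⟩ := (Matrix.exists_mulVec_eq_zero_iff).mpr hdet
  have heig : Module.End.HasEigenvalue (Matrix.toLin' A) lam := by
    apply Module.End.hasEigenvalue_of_hasEigenvector (x := v)
    refine ⟨Module.End.mem_eigenspace_iff.mpr ?_, hv0⟩
    rw [Matrix.toLin'_apply]
    have : (lam • (1 : Matrix (Fin n) (Fin n) ℂ)) *ᵥ v - A *ᵥ v = 0 := by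
      rw [← Matrix.sub_mulVec]; exact hv
    have h1 : (lam • (1 : Matrix (Fin n) (Fin n) ℂ)) *ᵥ v = lam • v := by
      rw [Matrix.smul_mulVec, Matrix.one_mulVec]
    rw [h1, sub_eq_zero] at this
    exact this.symm
  obtain ⟨i, hi⟩ := eigenvalue_mem_ball heig
  rw [Metric.mem_closedBall, dist_eq_norm] at hi
  -- bound the radius
  have hrad : ∑ j ∈ Finset.univ.erase i, ‖A i j‖ ≤ T := by
    have hbound : ∀ j ∈ Finset.univ.erase i, ‖A i j‖ ≤ ε⁻¹ * Cω := by
      intro j hj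
      have hij : i ≠ j := (Finset.mem_erase.mp hj).1.symm
      rw [hAoff i j hij]
      rw [Complex.norm_real, Real.norm_eq_abs, abs_mul, abs_mul]
      rw [abs_of_pos (inv_pos.mpr hε)]
      have hz := hzb j
      have : |ω' i j| * |z j| ≤ Cω * 1 := by
        apply mul_le_mul (hCω i j) _ (abs_nonneg _) hCω0
        rw [abs_of_nonneg (le_trans hδ.le hz.1)]
        exact hz.2
      nlinarith [inv_pos.mpr hε]
    calc ∑ j ∈ Finset.univ.erase i, ‖A i j‖ ≤ ∑ _j ∈ Finset.univ.erase i, ε⁻¹ * Cω :=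
          Finset.sum_le_sum hbound
      _ = (Finset.univ.erase i).card * (ε⁻¹ * Cω) := by
          rw [Finset.sum_const, nsmul_eq_mul]
      _ ≤ T := by
          rw [hTdef]
          have hc : (((Finset.univ : Finset (Fin n)).erase i).card : ℝ) ≤ (n : ℝ) := by
            exact_mod_cast Finset.card_erase_le.trans (by simp)
          exact mul_le_mul_of_nonneg_right hc (by positivity)
  -- bound the diagonal
  have hωδ : ε / δ * (2 + |k| + T) < |ω| := lt_of_le_of_lt (le_max_right _ _) hω
  have hdiag : 2 + |k| + T ≤ ‖A i i‖ + |k| := by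
    rw [hAdiag i, Complex.norm_real, Real.norm_eq_abs]
    have h1 : ε⁻¹ * (|ω| * δ) ≤ |k + ε⁻¹ * (ω * z i)| + |k| := by
      have h2 : ε⁻¹ * (|ω| * z i) = |ε⁻¹ * (ω * z i)| := by
        rw [abs_mul, abs_mul, abs_of_pos (inv_pos.mpr hε),
          abs_of_nonneg (le_trans hδ.le (hzb i).1)]
      have h3 : ε⁻¹ * (|ω| * δ) ≤ ε⁻¹ * (|ω| * z i) := by
        apply mul_le_mul_of_nonneg_left _ (inv_pos.mpr hε).le
        exact mul_le_mul_of_nonneg_left (hzb i).1 (abs_nonneg ω)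
      calc ε⁻¹ * (|ω| * δ) ≤ |ε⁻¹ * (ω * z i)| := h2 ▸ h3
        _ ≤ |k + ε⁻¹ * (ω * z i)| + |k| := by
            have := abs_sub_abs_le_abs_sub (ε⁻¹ * (ω * z i)) (-k)
            simp only [abs_neg, sub_neg_eq_add, add_comm] at this
            linarith [abs_add_le k (ε⁻¹ * (ω * z i)), abs_sub_abs_le_abs_sub
              (k + ε⁻¹ * (ω * z i)) k, abs_abs (ε⁻¹ * (ω * z i))]
    have h4 : 2 + |k| + T < ε⁻¹ * (|ω| * δ) := by
      have : ε / δ * (2 + |k| + T) * (δ / ε) < |ω| * (δ / ε) := by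
        apply mul_lt_mul_of_pos_right hωδ (by positivity)
      have he : ε / δ * (2 + |k| + T) * (δ / ε) = 2 + |k| + T := by
        field_simp
      rw [he] at this
      calc 2 + |k| + T < |ω| * (δ / ε) := this
        _ = ε⁻¹ * (|ω| * δ) := by ring
    linarith
  -- conclude
  have h5 : ‖A i i‖ ≤ ‖lam‖ + ‖lam - A i i‖ := by
    have h := norm_add_le lam (A i i - lam)
    have he : lam + (A i i - lam) = A i i := by ring
    rw [he, norm_sub_rev] at h
    exact h
  have h6 := hi.trans hrad
  linarith
end

section
/- (Urabe) Let F : ℝⁿ → ℝⁿ be C¹ on a region Ω, and suppose Ȳ ∈ Ω satisfies: det F_Y(Ȳ) ≠ 0, ‖F(Ȳ)‖ < r, ‖F_Y(Ȳ)⁻¹‖ < d, the ball Ω_ε = {Y : ‖Y−Ȳ‖ < ε} ⊂ Ω, ‖F_Y(Y) − F_Y(Ȳ)‖ < μ/d for all Y ∈ Ω_ε with 0 ≤ μ < 1, and rd/(1−μ) < ε. Then F(Y) = 0 has exactly one solution Y* in Ω_ε, and ‖Ȳ − Y*‖ ≤ rd/(1−μ). -/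
theorem stmt_15 {n : ℕ}
    (F : EuclideanSpace ℝ (Fin n) → EuclideanSpace ℝ (Fin n))
    (F' : EuclideanSpace ℝ (Fin n) →
      EuclideanSpace ℝ (Fin n) →L[ℝ] EuclideanSpace ℝ (Fin n))
    (Ω : Set (EuclideanSpace ℝ (Fin n))) (hΩ : IsOpen Ω)
    (hF' : ∀ Y ∈ Ω, HasFDerivAt F (F' Y) Y)
    (hF'cont : ContinuousOn F' Ω)
    (Ybar : EuclideanSpace ℝ (Fin n)) (hYbar : Ybar ∈ Ω)
    (J : EuclideanSpace ℝ (Fin n) ≃L[ℝ] EuclideanSpace ℝ (Fin n))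
    (hJ : (J : EuclideanSpace ℝ (Fin n) →L[ℝ] EuclideanSpace ℝ (Fin n)) = F' Ybar)
    (r d ε μ : ℝ) (hr : 0 < r) (hd : 0 < d) (hε : 0 < ε) (hμ0 : 0 ≤ μ) (hμ1 : μ < 1)
    (hFnorm : ‖F Ybar‖ < r)
    (hinv : ‖(J.symm : EuclideanSpace ℝ (Fin n) →L[ℝ] EuclideanSpace ℝ (Fin n))‖ < d)
    (hball : Metric.ball Ybar ε ⊆ Ω)
    (hLip : ∀ Y ∈ Metric.ball Ybar ε, ‖F' Y - F' Ybar‖ < μ / d)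
    (hrd : r * d / (1 - μ) < ε) :
    ∃ Ystar ∈ Metric.ball Ybar ε,
      F Ystar = 0 ∧ ‖Ybar - Ystar‖ ≤ r * d / (1 - μ) ∧
      ∀ Y ∈ Metric.ball Ybar ε, F Y = 0 → Y = Ystar := by
  have h1μ : (0:ℝ) < 1 - μ := by linarith
  set ρ : ℝ := r * d / (1 - μ) with hρ
  have hρpos : 0 < ρ := div_pos (mul_pos hr hd) h1μ
  set G : EuclideanSpace ℝ (Fin n) → EuclideanSpace ℝ (Fin n) :=
    fun Y => Y - J.symm (F Y) with hG
  -- derivative of G on the ball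
  have hGderiv : ∀ Y ∈ Metric.ball Ybar ε,
      HasFDerivAt G (ContinuousLinearMap.id ℝ (EuclideanSpace ℝ (Fin n)) -
        (J.symm : EuclideanSpace ℝ (Fin n) →L[ℝ] EuclideanSpace ℝ (Fin n)).comp (F' Y)) Y := by
    intro Y hY
    exact (hasFDerivAt_id Y).sub
      (((J.symm : EuclideanSpace ℝ (Fin n) →L[ℝ] EuclideanSpace ℝ (Fin n)).hasFDerivAt).comp Y
        (hF' Y (hball hY)))
  -- norm bound on the derivative
  have hGbound : ∀ Y ∈ Metric.ball Ybar ε,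
      ‖ContinuousLinearMap.id ℝ (EuclideanSpace ℝ (Fin n)) -
        (J.symm : EuclideanSpace ℝ (Fin n) →L[ℝ] EuclideanSpace ℝ (Fin n)).comp (F' Y)‖ ≤ μ := by
    intro Y hY
    have heq : ContinuousLinearMap.id ℝ (EuclideanSpace ℝ (Fin n)) -
        (J.symm : EuclideanSpace ℝ (Fin n) →L[ℝ] EuclideanSpace ℝ (Fin n)).comp (F' Y)
        = (J.symm : EuclideanSpace ℝ (Fin n) →L[ℝ] EuclideanSpace ℝ (Fin n)).comp
            (F' Ybar - F' Y) := by
      ext x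
      simp [ContinuousLinearMap.comp_apply, ← hJ, map_sub,
        ContinuousLinearEquiv.symm_apply_apply]
    rw [heq]
    calc ‖(J.symm : EuclideanSpace ℝ (Fin n) →L[ℝ] EuclideanSpace ℝ (Fin n)).comp
            (F' Ybar - F' Y)‖
        ≤ ‖(J.symm : EuclideanSpace ℝ (Fin n) →L[ℝ] EuclideanSpace ℝ (Fin n))‖ *
            ‖F' Ybar - F' Y‖ := ContinuousLinearMap.opNorm_comp_le _ _
      _ ≤ d * (μ / d) := by
          have h1 := hLip Y hY
          rw [norm_sub_rev] at h1
          exact mul_le_mul hinv.le h1.le (norm_nonneg _) hd.le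
      _ = μ := by field_simp
  -- Lipschitz estimate on the ball
  have hGlip : ∀ x ∈ Metric.ball Ybar ε, ∀ y ∈ Metric.ball Ybar ε,
      ‖G y - G x‖ ≤ μ * ‖y - x‖ := by
    intro x hx y hy
    exact (convex_ball Ybar ε).norm_image_sub_le_of_norm_hasFDerivWithin_le
      (fun z hz => (hGderiv z hz).hasFDerivWithinAt) (fun z hz => hGbound z hz) hx hy
  have hballsub : Metric.closedBall Ybar ρ ⊆ Metric.ball Ybar ε :=
    Metric.closedBall_subset_ball hrd
  have hcenter : Ybar ∈ Metric.ball Ybar ε := Metric.mem_ball_self hε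
  have hGc : ‖G Ybar - Ybar‖ ≤ d * r := by
    have he : G Ybar - Ybar = -(J.symm (F Ybar)) := by simp [hG]
    rw [he, norm_neg]
    calc ‖J.symm (F Ybar)‖
        ≤ ‖(J.symm : EuclideanSpace ℝ (Fin n) →L[ℝ] EuclideanSpace ℝ (Fin n))‖ * ‖F Ybar‖ :=
          (J.symm : EuclideanSpace ℝ (Fin n) →L[ℝ] EuclideanSpace ℝ (Fin n)).le_opNorm _
      _ ≤ d * r := mul_le_mul hinv.le hFnorm.le (norm_nonneg _) hd.le
  -- G maps the closed ball into itself
  have hGself : ∀ Y ∈ Metric.closedBall Ybar ρ, G Y ∈ Metric.closedBall Ybar ρ := by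
    intro Y hY
    have hYb : Y ∈ Metric.ball Ybar ε := hballsub hY
    have h1 : ‖G Y - G Ybar‖ ≤ μ * ‖Y - Ybar‖ := hGlip Ybar hcenter Y hYb
    have hYd : ‖Y - Ybar‖ ≤ ρ := by
      rw [← dist_eq_norm]; exact Metric.mem_closedBall.mp hY
    have htri : ‖G Y - Ybar‖ ≤ ‖G Y - G Ybar‖ + ‖G Ybar - Ybar‖ :=
      norm_sub_le_norm_sub_add_norm_sub _ _ _
    rw [Metric.mem_closedBall, dist_eq_norm]
    have hμρ : μ * ‖Y - Ybar‖ ≤ μ * ρ := mul_le_mul_of_nonneg_left hYd hμ0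
    have hsum : μ * ρ + d * r = ρ := by
      rw [hρ]; field_simp; ring
    linarith
  -- fixed point via Banach on the closed ball
  haveI : CompleteSpace (Metric.closedBall Ybar ρ) :=
    IsClosed.completeSpace_coe (hs := Metric.isClosed_closedBall)
  haveI : Nonempty (Metric.closedBall Ybar ρ) :=
    ⟨⟨Ybar, Metric.mem_closedBall_self hρpos.le⟩⟩
  set g : (Metric.closedBall Ybar ρ) → (Metric.closedBall Ybar ρ) :=
    fun x => ⟨G x.1, hGself x.1 x.2⟩ with hg
  have hK : (⟨μ, hμ0⟩ : NNReal) < 1 := by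
    exact (NNReal.coe_lt_coe (r₁ := ⟨μ, hμ0⟩) (r₂ := 1)).mp hμ1
  have hgc : ContractingWith ⟨μ, hμ0⟩ g := by
    refine ⟨hK, LipschitzWith.of_dist_le_mul fun x y => ?_⟩
    have := hGlip y.1 (hballsub y.2) x.1 (hballsub x.2)
    simp [hg, Subtype.dist_eq, dist_eq_norm]; exact this
  set xstar := hgc.fixedPoint g with hxs
  have hfix : g xstar = xstar := hgc.fixedPoint_isFixedPt
  have hGfix : G xstar.1 = xstar.1 := congrArg Subtype.val hfix
  have h1 : J.symm (F xstar.1) = 0 := by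
    have h2 : xstar.1 - J.symm (F xstar.1) = xstar.1 := hGfix
    exact sub_eq_self.mp h2
  have hFzero : F xstar.1 = 0 := by
    have h3 := congrArg J h1
    rwa [ContinuousLinearEquiv.apply_symm_apply, map_zero] at h3
  have hYsball : xstar.1 ∈ Metric.ball Ybar ε := hballsub xstar.2
  refine ⟨xstar.1, hYsball, hFzero, ?_, ?_⟩
  · rw [norm_sub_rev, ← dist_eq_norm]
    exact Metric.mem_closedBall.mp xstar.2
  · intro Y hY hFY
    have hGY : G Y = Y := by simp [hG, hFY]
    have h4 : ‖Y - xstar.1‖ ≤ μ * ‖Y - xstar.1‖ := by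
      have := hGlip xstar.1 hYsball Y hY
      rwa [hGY, hGfix] at this
    by_contra hne
    have hpos : 0 < ‖Y - xstar.1‖ := by
      rw [norm_pos_iff, sub_ne_zero]; exact hne
    nlinarith
end

section
/- Let F(Y) = kY + W·X(Y) + I − ω·I₀ on ℝⁿ with all diagonal weights equal to ω and 0 < a_{0i} < 1 for all i. Then there exists c > 0 such that for all |ω| > c the matrix W is invertible and the point Ȳ(ω) determined by X(Ȳ) = −W⁻¹(I − ω I₀) exists, is bounded, and satisfies lim_{|ω|→∞} Ȳ(ω) = ε·(ln(a_{01}/(1−a_{01})), ..., ln(a_{0n}/(1−a_{0n})))ᵀ. -/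
attribute [local instance 2000] Matrix.linftyOpNormedRing Matrix.linftyOpNormedAlgebra

open Filter Topology Matrix

lemma sigmoid_log_div {ε p : ℝ} (hε : 0 < ε) (hp : p ∈ Set.Ioo (0:ℝ) 1) :
    sigmoid (ε * Real.log (p / (1 - p)) / ε) = p := by
  obtain ⟨h0, h1⟩ := hp
  have h1' : 0 < 1 - p := by linarith
  have hq : (0:ℝ) < p / (1 - p) := div_pos h0 h1'
  have : ε * Real.log (p / (1 - p)) / ε = Real.log (p / (1 - p)) := by
    field_simp
  rw [this, sigmoid, Real.exp_neg, Real.exp_log hq, inv_div]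
  rw [show 1 + (1 - p) / p = 1 / p by field_simp; ring]
  simp

theorem stmt_17 {n : ℕ} (ω' : Fin n → Fin n → ℝ) (a a0 : Fin n → ℝ)
    (ha0 : ∀ i, a0 i ∈ Set.Ioo (0:ℝ) 1) (ε : ℝ) (hε : 0 < ε) :
    ∃ c > (0:ℝ), ∃ Ybar : ℝ → (Fin n → ℝ),
      (∀ ω : ℝ, c < |ω| →
        IsUnit (weightMat ω' ω) ∧
        ∀ i, sigmoid (Ybar ω i / ε) =
          (-(Matrix.mulVec (weightMat ω' ω)⁻¹ (a - ω • a0))) i) ∧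
      (∃ M : ℝ, ∀ ω : ℝ, c < |ω| → ∀ i, |Ybar ω i| ≤ M) ∧
      Filter.Tendsto Ybar (Filter.comap (fun ω : ℝ => |ω|) Filter.atTop)
        (nhds (fun i => ε * Real.log (a0 i / (1 - a0 i)))) := by
  classical
  set F : Filter ℝ := Filter.comap (fun ω : ℝ => |ω|) Filter.atTop with hF
  set B : Matrix (Fin n) (Fin n) ℝ := weightMat ω' 0 with hBdef
  set c₀ : ℝ := ‖B‖ + 1 with hc₀def
  have hc₀pos : (0:ℝ) < c₀ := by positivity
  -- decomposition
  have hdec : ∀ ω : ℝ, ω ≠ 0 →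
      weightMat ω' ω = ω • ((1 : Matrix (Fin n) (Fin n) ℝ) + ω⁻¹ • B) := by
    intro ω hω
    ext i j
    by_cases h : i = j <;>
      simp [weightMat, hBdef, Matrix.one_apply, h, Matrix.smul_apply, Matrix.add_apply,
        mul_inv_cancel₀ hω, ← mul_assoc]
  have hsmall : ∀ ω : ℝ, c₀ < |ω| → ‖ω⁻¹ • B‖ < 1 := by
    intro ω hc
    have h1 : (0:ℝ) < |ω| := lt_trans hc₀pos hc
    rw [norm_smul, norm_inv, Real.norm_eq_abs]
    have hB : ‖B‖ < |ω| := by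
      have : ‖B‖ < c₀ := by rw [hc₀def]; linarith
      linarith
    calc |ω|⁻¹ * ‖B‖ < |ω|⁻¹ * |ω| :=
          mul_lt_mul_of_pos_left hB (inv_pos.2 h1)
      _ = 1 := inv_mul_cancel₀ (ne_of_gt h1)
  have hCunit : ∀ ω : ℝ, c₀ < |ω| →
      IsUnit ((1 : Matrix (Fin n) (Fin n) ℝ) + ω⁻¹ • B) := by
    intro ω hc
    have h := hsmall ω hc
    have h' : ‖-(ω⁻¹ • B)‖ < 1 := by rwa [norm_neg]
    simpa [sub_neg_eq_add] using (Units.oneSub (-(ω⁻¹ • B)) h').isUnit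
  have hWunit : ∀ ω : ℝ, c₀ < |ω| → IsUnit (weightMat ω' ω) := by
    intro ω hc
    have hω : ω ≠ 0 := by
      intro h; rw [h] at hc; simp at hc; linarith
    have hsm1 : IsUnit (ω • (1 : Matrix (Fin n) (Fin n) ℝ)) := by
      rw [← Algebra.algebraMap_eq_smul_one]
      exact (isUnit_iff_ne_zero.2 hω).map (algebraMap ℝ (Matrix (Fin n) (Fin n) ℝ))
    have heq : weightMat ω' ω
        = (ω • (1 : Matrix (Fin n) (Fin n) ℝ)) * ((1 : Matrix (Fin n) (Fin n) ℝ) + ω⁻¹ • B) := by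
      rw [hdec ω hω, Matrix.smul_mul, one_mul]
    rw [heq]
    exact hsm1.mul (hCunit ω hc)
  -- the auxiliary function
  set g : ℝ → (Fin n → ℝ) := fun t =>
    (Ring.inverse ((1 : Matrix (Fin n) (Fin n) ℝ) + t • B)) *ᵥ (a0 - t • a) with hgdef
  set v : ℝ → (Fin n → ℝ) := fun ω =>
    -((weightMat ω' ω)⁻¹ *ᵥ (a - ω • a0)) with hvdef
  have hVinv : ∀ ω : ℝ, c₀ < |ω| → v ω = g ω⁻¹ := by
    intro ω hc
    have hω : ω ≠ 0 := by
      intro h; rw [h] at hc; simp at hc; linarith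
    have hCu := hCunit ω hc
    have hWu := hWunit ω hc
    have hmul : (weightMat ω' ω) *ᵥ (g ω⁻¹) = ω • a0 - a := by
      rw [hgdef]
      show (weightMat ω' ω) *ᵥ
        ((Ring.inverse ((1 : Matrix (Fin n) (Fin n) ℝ) + ω⁻¹ • B)) *ᵥ (a0 - ω⁻¹ • a)) = _
      rw [Matrix.mulVec_mulVec, hdec ω hω, Matrix.smul_mul,
        Ring.mul_inverse_cancel _ hCu]
      rw [smul_mulVec, Matrix.one_mulVec, smul_sub, smul_smul,
        mul_inv_cancel₀ hω, one_smul]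
    have hWdet : IsUnit (weightMat ω' ω).det := (Matrix.isUnit_iff_isUnit_det _).1 hWu
    have hv1 : v ω = (weightMat ω' ω)⁻¹ *ᵥ (ω • a0 - a) := by
      rw [hvdef]
      show -((weightMat ω' ω)⁻¹ *ᵥ (a - ω • a0)) = _
      rw [← Matrix.mulVec_neg, neg_sub]
    rw [hv1, ← hmul, Matrix.mulVec_mulVec, Matrix.nonsing_inv_mul _ hWdet,
      Matrix.one_mulVec]
  -- limit of g at 0
  have hRt : Tendsto (fun t : ℝ => Ring.inverse ((1 : Matrix (Fin n) (Fin n) ℝ) + t • B))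
      (nhds 0) (nhds 1) := by
    have hcont : Continuous (fun t : ℝ => (1 : Matrix (Fin n) (Fin n) ℝ) + t • B) :=
      continuous_const.add (continuous_id.smul continuous_const)
    have h0 : Tendsto (fun t : ℝ => (1 : Matrix (Fin n) (Fin n) ℝ) + t • B)
        (nhds 0) (nhds 1) := by
      simpa using hcont.tendsto 0
    have h2 := (NormedRing.inverse_continuousAt (1 : (Matrix (Fin n) (Fin n) ℝ)ˣ)).tendsto
    have h3 := h2.comp h0
    simp only [Units.val_one, Ring.inverse_one] at h3
    exact h3
  have hg0 : Tendsto g (nhds 0) (nhds a0) := by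
    rw [tendsto_iff_norm_sub_tendsto_zero]
    have hid : ∀ t : ℝ, g t - a0 =
        (Ring.inverse ((1 : Matrix (Fin n) (Fin n) ℝ) + t • B) - 1) *ᵥ (a0 - t • a)
          - t • a := by
      intro t
      rw [hgdef]
      show (Ring.inverse ((1 : Matrix (Fin n) (Fin n) ℝ) + t • B)) *ᵥ (a0 - t • a) - a0 = _
      rw [Matrix.sub_mulVec, Matrix.one_mulVec]
      abel
    have hb : ∀ t : ℝ, ‖g t - a0‖ ≤
        ‖Ring.inverse ((1 : Matrix (Fin n) (Fin n) ℝ) + t • B) - 1‖ * ‖a0 - t • a‖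
          + ‖t • a‖ := by
      intro t
      rw [hid t]
      refine (norm_sub_le _ _).trans ?_
      exact add_le_add (Matrix.linfty_opNorm_mulVec _ _) le_rfl
    have hφ : Tendsto (fun t : ℝ =>
        ‖Ring.inverse ((1 : Matrix (Fin n) (Fin n) ℝ) + t • B) - 1‖) (nhds 0) (nhds 0) :=
      tendsto_iff_norm_sub_tendsto_zero.1 hRt
    have hψ : Tendsto (fun t : ℝ => ‖a0 - t • a‖) (nhds 0) (nhds ‖a0‖) := by
      have : Continuous (fun t : ℝ => ‖a0 - t • a‖) :=
        (continuous_const.sub (continuous_id.smul continuous_const)).norm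
      simpa using this.tendsto 0
    have hχ : Tendsto (fun t : ℝ => ‖t • a‖) (nhds 0) (nhds 0) := by
      have : Continuous (fun t : ℝ => ‖t • a‖) :=
        (continuous_id.smul continuous_const).norm
      simpa using this.tendsto 0
    have hbound : Tendsto (fun t : ℝ =>
        ‖Ring.inverse ((1 : Matrix (Fin n) (Fin n) ℝ) + t • B) - 1‖ * ‖a0 - t • a‖
          + ‖t • a‖) (nhds 0) (nhds 0) := by
      have := (hφ.mul hψ).add hχ
      simpa using this
    exact squeeze_zero (fun t => norm_nonneg _) hb hbound
  -- limit of v along F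
  have habs : Tendsto (fun ω : ℝ => |ω|) F atTop := tendsto_comap
  have hinv : Tendsto (fun ω : ℝ => ω⁻¹) F (nhds 0) := by
    rw [tendsto_zero_iff_norm_tendsto_zero]
    have h1 : Tendsto (fun ω : ℝ => |ω|⁻¹) F (nhds 0) :=
      tendsto_inv_atTop_zero.comp habs
    have h2 : (fun ω : ℝ => ‖ω⁻¹‖) = fun ω : ℝ => |ω|⁻¹ := by
      funext ω; rw [Real.norm_eq_abs, abs_inv]
    rw [h2]; exact h1
  have hev : ∀ᶠ ω in F, c₀ < |ω| := habs.eventually (eventually_gt_atTop c₀)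
  have hvF : Tendsto v F (nhds a0) := by
    have hcomp : Tendsto (fun ω : ℝ => g ω⁻¹) F (nhds a0) := hg0.comp hinv
    exact hcomp.congr' (hev.mono fun ω hc => (hVinv ω hc).symm)
  -- eventually in (0,1)
  have hIoo : ∀ᶠ ω in F, ∀ i, v ω i ∈ Set.Ioo (0:ℝ) 1 :=
    eventually_all.2 fun i =>
      (tendsto_pi_nhds.1 hvF i).eventually (Ioo_mem_nhds (ha0 i).1 (ha0 i).2)
  -- Ybar and its limit
  set L : Fin n → ℝ := fun i => ε * Real.log (a0 i / (1 - a0 i)) with hLdef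
  set Ybar : ℝ → Fin n → ℝ := fun ω i => ε * Real.log (v ω i / (1 - v ω i)) with hYdef
  have hYtend : Tendsto Ybar F (nhds L) := by
    rw [tendsto_pi_nhds]
    intro i
    have h1' : 0 < 1 - a0 i := by linarith [(ha0 i).2]
    have h1 : (0:ℝ) < a0 i / (1 - a0 i) := div_pos (ha0 i).1 h1'
    have hcont : ContinuousAt (fun p : ℝ => ε * Real.log (p / (1 - p))) (a0 i) := by
      apply continuousAt_const.mul
      have hdiv : ContinuousAt (fun p : ℝ => p / (1 - p)) (a0 i) :=
        continuousAt_id.div (continuousAt_const.sub continuousAt_id) (ne_of_gt h1')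
      exact hdiv.log (ne_of_gt h1)
    exact hcont.tendsto.comp (tendsto_pi_nhds.1 hvF i)
  -- eventual bound
  have hbd : ∀ᶠ ω in F, ∀ i, |Ybar ω i - L i| ≤ 1 := by
    refine eventually_all.2 fun i => ?_
    have h' : ∀ᶠ x in nhds (L i), |x - L i| ≤ 1 := by
      filter_upwards [Metric.closedBall_mem_nhds (L i) one_pos] with x hx
      rw [Metric.mem_closedBall, Real.dist_eq] at hx
      exact hx
    exact (tendsto_pi_nhds.1 hYtend i).eventually h'
  -- extract a threshold
  have hall : ∀ᶠ ω in F,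
      (∀ i, v ω i ∈ Set.Ioo (0:ℝ) 1) ∧ (∀ i, |Ybar ω i - L i| ≤ 1) := hIoo.and hbd
  rw [hF, eventually_comap] at hall
  rw [eventually_atTop] at hall
  obtain ⟨c₁, hc₁⟩ := hall
  refine ⟨max c₀ c₁, lt_of_lt_of_le hc₀pos (le_max_left _ _), Ybar, ?_, ?_, hYtend⟩
  · intro ω hc
    have hcω : c₀ < |ω| := lt_of_le_of_lt (le_max_left _ _) hc
    have hP := hc₁ |ω| (le_of_lt (lt_of_le_of_lt (le_max_right _ _) hc)) ω rfl
    refine ⟨hWunit ω hcω, fun i => ?_⟩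
    show sigmoid (Ybar ω i / ε) = v ω i
    have := sigmoid_log_div hε (hP.1 i)
    exact this
  · obtain ⟨M0, hM0⟩ : ∃ M0 : ℝ, ∀ i, |L i| ≤ M0 :=
      ⟨∑ i, |L i|, fun i => Finset.single_le_sum (f := fun i => |L i|)
        (fun _ _ => abs_nonneg _) (Finset.mem_univ i)⟩
    refine ⟨M0 + 1, fun ω hc i => ?_⟩
    have hP := hc₁ |ω| (le_of_lt (lt_of_le_of_lt (le_max_right _ _) hc)) ω rfl
    have h1 := abs_add_le (Ybar ω i - L i) (L i)
    rw [sub_add_cancel] at h1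
    linarith [hP.2 i, hM0 i]
end
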